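/- arXiv:2203.13029 — 2 statements merged into one kernel-verified Lean document; each statement's English description precedes it below -/
import Mathlib

section
/- Let H and K be n×n complex Hermitian matrices with n ≥ 2, and set A = H + iK. If H is positive definite, then det H ≤ det H + |det K| ≤ |det A|. -/
open Matrix Complex
open scoped ComplexOrder

lemma aux1 {ι : Type*} (s : Finset ι) (hs : s.Nonempty) (a : ι → ℝ) (ha : ∀ i, 0 ≤ a i) :
    1 + (∏ i ∈ s, a i) ^ 2 ≤ ∏ i ∈ s, (1 + a i ^ 2) := by
  induction s using Finset.cons_induction with
  | empty => exact absurd hs (by simp)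
  | cons x t hx ih =>
    rcases t.eq_empty_or_nonempty with rfl | ht
    · simp
    · rw [Finset.prod_cons, Finset.prod_cons, mul_pow]
      have h1 : 1 + (∏ i ∈ t, a i) ^ 2 ≤ ∏ i ∈ t, (1 + a i ^ 2) := ih ht
      have hP : 0 ≤ ∏ i ∈ t, a i := Finset.prod_nonneg fun i _ => ha i
      nlinarith [sq_nonneg (a x), sq_nonneg (a x * ∏ i ∈ t, a i), ha x, sq_nonneg (∏ i ∈ t, a i)]

private lemma aux2 {ι : Type*} [DecidableEq ι] (s : Finset ι) (hs : 2 ≤ s.card) (a : ι → ℝ) (ha : ∀ i, 0 ≤ a i) :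
    (1 + ∏ i ∈ s, a i) ^ 2 ≤ ∏ i ∈ s, (1 + a i ^ 2) := by
  obtain ⟨x, hx⟩ := Finset.card_pos.mp (show 0 < s.card by omega)
  have herase : (s.erase x).Nonempty := Finset.card_pos.mp (by rw [Finset.card_erase_of_mem hx]; omega)
  rw [← Finset.insert_erase hx, Finset.prod_insert (Finset.notMem_erase x s),
    Finset.prod_insert (Finset.notMem_erase x s)]
  have h1 := aux1 _ herase a ha
  have hQ : 0 ≤ ∏ i ∈ s.erase x, a i := Finset.prod_nonneg fun i _ => ha i
  nlinarith [sq_nonneg (a x - ∏ i ∈ s.erase x, a i), ha x, sq_nonneg (a x), sq_nonneg (∏ i ∈ s.erase x, a i)]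

private lemma keylem {n : ℕ} (hn : 2 ≤ n) (a : Fin n → ℝ) (ha : ∀ i, 0 ≤ a i) :
    1 + ∏ i, a i ≤ ∏ i, Real.sqrt (1 + a i ^ 2) := by
  have h1 : 0 ≤ 1 + ∏ i, a i := by have := Finset.prod_nonneg (s := Finset.univ) fun i _ => ha i; linarith
  have h2 : 0 ≤ ∏ i, Real.sqrt (1 + a i ^ 2) := Finset.prod_nonneg fun i _ => Real.sqrt_nonneg _
  have hsq : (1 + ∏ i, a i) ^ 2 ≤ (∏ i, Real.sqrt (1 + a i ^ 2)) ^ 2 := by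
    rw [← Finset.prod_pow]
    have : ∀ i : Fin n, Real.sqrt (1 + a i ^ 2) ^ 2 = 1 + a i ^ 2 := fun i =>
      Real.sq_sqrt (by positivity)
    rw [Finset.prod_congr rfl fun i _ => this i]
    exact aux2 Finset.univ (by simpa using hn) a ha
  exact (pow_le_pow_iff_left₀ h1 h2 (by norm_num)).mp hsq

open scoped MatrixOrder in
private lemma sqrt_exists {n : ℕ} {H : Matrix (Fin n) (Fin n) ℂ} (h : H.PosDef) :
    ∃ S : Matrix (Fin n) (Fin n) ℂ, S * S = H ∧ S.IsHermitian :=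
  ⟨CFC.sqrt H, CFC.sqrt_mul_sqrt_self H h.posSemidef.nonneg,
    (CFC.sqrt_nonneg H).posSemidef.isHermitian⟩

/-- Ostrowski–Taussky inequality: for `n × n` Hermitian complex matrices `H, K`
with `n ≥ 2` and `A = H + iK`, if `H` is positive definite then
`det H ≤ det H + |det K| ≤ |det A|`. -/
theorem ostrowski_taussky {n : ℕ} (hn : 2 ≤ n)
    (H K : Matrix (Fin n) (Fin n) ℂ)
    (hH : H.IsHermitian) (hK : K.IsHermitian) (hHpd : H.PosDef)
    (A : Matrix (Fin n) (Fin n) ℂ) (hA : A = H + Complex.I • K) :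
    H.det.re ≤ H.det.re + ‖K.det‖ ∧
      H.det.re + ‖K.det‖ ≤ ‖A.det‖ := by
  obtain ⟨S, hS2, hSH⟩ := sqrt_exists hHpd
  have hHdetpos : (0:ℂ) < H.det := hHpd.det_pos
  have hHre : 0 < H.det.re ∧ H.det.im = 0 := by
    rw [Complex.lt_def] at hHdetpos; constructor
    · simpa using hHdetpos.1
    · simpa using hHdetpos.2.symm
  have hHdetne : H.det ≠ 0 := hHdetpos.ne'
  have hdS : S.det ≠ 0 := by
    intro h
    apply hHdetne
    rw [← hS2, det_mul, h, mul_zero]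
  have hunit : IsUnit S.det := isUnit_iff_ne_zero.mpr hdS
  set M := S⁻¹ * K * S⁻¹ with hMdef
  have hSinvH : S⁻¹.conjTranspose = S⁻¹ := by
    rw [Matrix.conjTranspose_nonsing_inv, hSH.eq]
  have hM : M.IsHermitian := by
    show Mᴴ = M
    rw [hMdef, Matrix.conjTranspose_mul, Matrix.conjTranspose_mul, hSinvH, hK.eq, Matrix.mul_assoc]
  have hSMS : S * M * S = K := by
    rw [hMdef]
    simp only [Matrix.mul_assoc, Matrix.nonsing_inv_mul _ hunit, Matrix.mul_one]
    rw [← Matrix.mul_assoc, Matrix.mul_nonsing_inv _ hunit, Matrix.one_mul]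
  have hfact : A = S * (1 + Complex.I • M) * S := by
    rw [hA, mul_add, add_mul, Matrix.mul_one, hS2, Matrix.mul_smul, Matrix.smul_mul, hSMS]
  set μ := hM.eigenvalues with hmu
  set U : Matrix (Fin n) (Fin n) ℂ := (Matrix.IsHermitian.eigenvectorUnitary hM : Matrix (Fin n) (Fin n) ℂ) with hUdef
  have hUU : U * star U = 1 := Matrix.mem_unitaryGroup_iff.mp (Matrix.IsHermitian.eigenvectorUnitary hM).2
  have hdiag : (1 : Matrix (Fin n) (Fin n) ℂ) + Complex.I • M
      = U * Matrix.diagonal (fun i => 1 + Complex.I * (μ i : ℂ)) * star U := by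
    have hsplit : Matrix.diagonal (fun i => 1 + Complex.I * (μ i : ℂ))
        = 1 + Complex.I • Matrix.diagonal (RCLike.ofReal ∘ μ) := by
      rw [← Matrix.diagonal_one, ← Matrix.diagonal_smul, ← Matrix.diagonal_add]
      rfl
    rw [hsplit, mul_add, add_mul, Matrix.mul_one, hUU, Matrix.mul_smul, Matrix.smul_mul]
    have hsp := hM.spectral_theorem
    rw [Unitary.conjStarAlgAut_apply] at hsp
    rw [← hsp]
  have hdet1 : (1 + Complex.I • M).det = ∏ i, (1 + Complex.I * (μ i : ℂ)) := by
    rw [hdiag, Matrix.det_mul_right_comm, hUU, Matrix.one_mul, Matrix.det_diagonal]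
  have hdetM : M.det = ∏ i, (μ i : ℂ) := hM.det_eq_prod_eigenvalues
  -- abs computations
  have habsfac : ∀ x : ℝ, ‖(1 + Complex.I * (x:ℂ))‖ = Real.sqrt (1 + x ^ 2) := by
    intro x
    have : (1 + Complex.I * (x:ℂ)) = ((1:ℝ) : ℂ) + (x:ℝ) * Complex.I := by push_cast; ring
    rw [this, Complex.norm_add_mul_I]
    norm_num
  have hHdetabs : ‖H.det‖ = H.det.re := by
    have h0 : H.det = (H.det.re : ℂ) := Complex.ext (by simp) (by simp [hHre.2])
    calc ‖H.det‖ = ‖((H.det.re : ℂ))‖ := by rw [← h0]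
      _ = |H.det.re| := by rw [Complex.norm_real, Real.norm_eq_abs]
      _ = H.det.re := abs_of_pos hHre.1
  have habsA : ‖A.det‖ = H.det.re * ∏ i, Real.sqrt (1 + μ i ^ 2) := by
    rw [hfact, Matrix.det_mul, Matrix.det_mul, norm_mul, norm_mul]
    rw [show ‖S.det‖ * ‖(1 + Complex.I • M).det‖ * ‖S.det‖
      = (‖S.det‖ * ‖S.det‖) * ‖(1 + Complex.I • M).det‖ by ring]
    rw [← norm_mul, ← Matrix.det_mul, hS2, hHdetabs, hdet1, norm_prod]
    congr 1
    exact Finset.prod_congr rfl fun i _ => habsfac (μ i)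
  have habsK : ‖K.det‖ = H.det.re * ∏ i, |μ i| := by
    rw [← hSMS, Matrix.det_mul, Matrix.det_mul, norm_mul, norm_mul]
    rw [show ‖S.det‖ * ‖M.det‖ * ‖S.det‖
      = (‖S.det‖ * ‖S.det‖) * ‖M.det‖ by ring]
    rw [← norm_mul, ← Matrix.det_mul, hS2, hHdetabs, hdetM, norm_prod]
    congr 1
    exact Finset.prod_congr rfl fun i _ => by rw [Complex.norm_real, Real.norm_eq_abs]
  refine ⟨?_, ?_⟩
  · have := norm_nonneg K.det
    linarith
  · rw [habsK, habsA]
    have hk := keylem hn (fun i => |μ i|) (fun i => abs_nonneg _)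
    simp only [_root_.sq_abs] at hk
    have := mul_le_mul_of_nonneg_left hk (le_of_lt hHre.1)
    rw [mul_add, mul_one] at this
    exact this
end

section
/- Let H and K be n×n complex Hermitian matrices with n ≥ 2, and set A = H + iK. If H is either positive definite or negative definite, then 0 < |det H| ≤ |det H| + |det K| ≤ |det A|. -/
open Matrix Complex
open scoped ComplexOrder

private lemma myProdSqrt {ι : Type*} (s : Finset ι) (f : ι → ℝ) (hf : ∀ i ∈ s, 0 ≤ f i) :
    Real.sqrt (∏ i ∈ s, f i) = ∏ i ∈ s, Real.sqrt (f i) := by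
  induction s using Finset.cons_induction with
  | empty => simp
  | cons a s ha ih =>
    rw [Finset.prod_cons, Finset.prod_cons,
      Real.sqrt_mul (hf _ (Finset.mem_cons_self a s)),
      ih fun i hi => hf i (Finset.mem_cons_of_mem hi)]

private lemma myOneAddProdLe {ι : Type*} (f : ι → ℝ) :
    ∀ s : Finset ι, s.Nonempty → (∀ i ∈ s, 0 ≤ f i) →
      1 + ∏ i ∈ s, f i ≤ ∏ i ∈ s, (1 + f i) := by
  intro s
  induction s using Finset.cons_induction with
  | empty => intro h; exact absurd h (by simp)
  | cons a s ha ih =>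
    intro _ hf
    rw [Finset.prod_cons, Finset.prod_cons]
    rcases s.eq_empty_or_nonempty with rfl | hs'
    · simp
    · have h1 := ih hs' fun i hi => hf i (Finset.mem_cons_of_mem hi)
      have h2 : 0 ≤ ∏ i ∈ s, f i :=
        Finset.prod_nonneg fun i hi => hf i (Finset.mem_cons_of_mem hi)
      have h3 : 0 ≤ f a := hf a (Finset.mem_cons_self a s)
      nlinarith [h1, h2, h3]

private lemma myRealKey {n : ℕ} (hn : 2 ≤ n) (l : Fin n → ℝ) :
    1 + ∏ i, |l i| ≤ ∏ i, Real.sqrt (1 + l i ^ 2) := by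
  have i0 : Fin n := ⟨0, by omega⟩
  have hmem : i0 ∈ (Finset.univ : Finset (Fin n)) := Finset.mem_univ _
  have key2 : (1 + ∏ i, |l i|) ^ 2 ≤ ∏ i, (1 + l i ^ 2) := by
    rw [← Finset.mul_prod_erase _ (fun i => (1 : ℝ) + l i ^ 2) hmem,
      ← Finset.mul_prod_erase _ (fun i => |l i|) hmem]
    set a := |l i0| with hadef
    set c := ∏ i ∈ Finset.univ.erase i0, |l i| with hc
    have hne : (Finset.univ.erase i0).Nonempty := by
      rw [← Finset.card_pos, Finset.card_erase_of_mem hmem, Finset.card_univ,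
        Fintype.card_fin]
      omega
    have hP := myOneAddProdLe (fun i => l i ^ 2) _ hne (fun i _ => sq_nonneg _)
    have hcc : ∏ i ∈ Finset.univ.erase i0, l i ^ 2 = c ^ 2 := by
      rw [hc, ← Finset.prod_pow]
      exact Finset.prod_congr rfl fun i _ => (_root_.sq_abs (l i)).symm
    rw [hcc] at hP
    have ha : 0 ≤ a := abs_nonneg _
    have hcn : 0 ≤ c := Finset.prod_nonneg fun i _ => abs_nonneg _
    have hla : l i0 ^ 2 = a ^ 2 := (_root_.sq_abs _).symm
    rw [hla]
    nlinarith [hP, sq_nonneg (a - c), mul_nonneg ha hcn, sq_nonneg (a * c),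
      mul_le_mul_of_nonneg_left hP (by positivity : (0:ℝ) ≤ 1 + a ^ 2)]
  calc 1 + ∏ i, |l i| = Real.sqrt ((1 + ∏ i, |l i|) ^ 2) := by
        rw [Real.sqrt_sq (by positivity)]
    _ ≤ Real.sqrt (∏ i, (1 + l i ^ 2)) := Real.sqrt_le_sqrt key2
    _ = ∏ i, Real.sqrt (1 + l i ^ 2) := myProdSqrt _ _ fun i _ => by positivity

private lemma myAbsDetS {n : ℕ} (S : Matrix (Fin n) (Fin n) ℂ) (hS : S.IsHermitian) :
    ‖S.det‖ = ∏ i, |hS.eigenvalues i| := by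
  rw [hS.det_eq_prod_eigenvalues, norm_prod]
  exact Finset.prod_congr rfl fun i _ => by simp

private lemma myAbsDetOneAdd {n : ℕ} (S : Matrix (Fin n) (Fin n) ℂ) (hS : S.IsHermitian) :
    ‖(1 + Complex.I • S).det‖ = ∏ i, Real.sqrt (1 + hS.eigenvalues i ^ 2) := by
  set U := (hS.eigenvectorUnitary : Matrix (Fin n) (Fin n) ℂ) with hUdef
  have hU : U * star U = 1 := Matrix.mem_unitaryGroup_iff.mp hS.eigenvectorUnitary.2
  set D : Matrix (Fin n) (Fin n) ℂ := Matrix.diagonal (RCLike.ofReal ∘ hS.eigenvalues) with hDdef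
  have key : (1 : Matrix (Fin n) (Fin n) ℂ) + Complex.I • S
      = U * (1 + Complex.I • D) * star U := by
    have hspec : S = U * D * star U := hS.spectral_theorem
    rw [mul_add, add_mul, mul_one, hU, mul_smul_comm, smul_mul_assoc,
      ← hspec]
  have hdiag : (1 : Matrix (Fin n) (Fin n) ℂ) + Complex.I • D
      = Matrix.diagonal (fun i => 1 + Complex.I * (hS.eigenvalues i : ℂ)) := by
    rw [hDdef, ← Matrix.diagonal_one, ← Matrix.diagonal_smul, ← Matrix.diagonal_add]
    rfl
  rw [key, det_mul_right_comm, hU, one_mul, hdiag, det_diagonal, norm_prod]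
  refine Finset.prod_congr rfl fun i _ => ?_
  rw [mul_comm]
  simpa using Complex.norm_add_mul_I 1 (hS.eigenvalues i)

open scoped MatrixOrder in
private lemma myMain {n : ℕ} (hn : 2 ≤ n) (H K : Matrix (Fin n) (Fin n) ℂ)
    (hH : H.PosDef) (hK : K.IsHermitian) :
    ‖H.det‖ + ‖K.det‖ ≤ ‖(H + Complex.I • K).det‖ := by
  set L := CFC.sqrt H with hLdef
  have hLherm : L.IsHermitian := (CFC.sqrt_nonneg H).posSemidef.1
  have hLL : L * L = H := CFC.sqrt_mul_sqrt_self H hH.posSemidef.nonneg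
  have hdetH : H.det ≠ 0 := hH.det_pos.ne'
  have hdetL : L.det ≠ 0 := by
    intro h; exact hdetH (by rw [← hLL, det_mul, h, zero_mul])
  set S := L⁻¹ * K * L⁻¹ with hSdef
  have hLinv : L * L⁻¹ = 1 := Matrix.mul_nonsing_inv _ hdetL.isUnit
  have hinvL : L⁻¹ * L = 1 := Matrix.nonsing_inv_mul _ hdetL.isUnit
  have hLinvherm : (L⁻¹).IsHermitian := hLherm.inv
  have hS : S.IsHermitian := by
    show Sᴴ = S
    rw [hSdef, conjTranspose_mul, conjTranspose_mul, hLinvherm.eq, hK.eq, mul_assoc]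
  have hKS : K = L * S * L := by
    rw [hSdef]
    calc K = (L * L⁻¹) * K * (L⁻¹ * L) := by rw [hLinv, hinvL, one_mul, mul_one]
      _ = L * (L⁻¹ * K * L⁻¹) * L := by noncomm_ring
  have hAeq : H + Complex.I • K = L * (1 + Complex.I • S) * L := by
    calc H + Complex.I • K = L * L + Complex.I • (L * S * L) := by rw [hLL, ← hKS]
      _ = L * (1 + Complex.I • S) * L := by
          rw [mul_add, add_mul, mul_one, mul_smul_comm, smul_mul_assoc]
  have hdLL : L.det * L.det = H.det := by rw [← det_mul, hLL]
  have hdetA : ‖(H + Complex.I • K).det‖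
      = ‖H.det‖ * ‖(1 + Complex.I • S).det‖ := by
    rw [hAeq, det_mul, det_mul,
      show L.det * (1 + Complex.I • S).det * L.det
        = (L.det * L.det) * (1 + Complex.I • S).det from by ring, hdLL, norm_mul]
  have hdetK : ‖K.det‖ = ‖H.det‖ * ‖S.det‖ := by
    rw [hKS, det_mul, det_mul,
      show L.det * S.det * L.det = (L.det * L.det) * S.det from by ring, hdLL, norm_mul]
  rw [hdetA, hdetK]
  have h1 : 1 + ‖S.det‖ ≤ ‖(1 + Complex.I • S).det‖ := by
    rw [myAbsDetS S hS, myAbsDetOneAdd S hS]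
    exact myRealKey hn _
  calc ‖H.det‖ + ‖H.det‖ * ‖S.det‖
      = ‖H.det‖ * (1 + ‖S.det‖) := by ring
    _ ≤ ‖H.det‖ * ‖(1 + Complex.I • S).det‖ :=
        mul_le_mul_of_nonneg_left h1 (norm_nonneg _)

private lemma myAbsDetNeg {n : ℕ} (M : Matrix (Fin n) (Fin n) ℂ) :
    ‖(-M).det‖ = ‖M.det‖ := by
  rw [det_neg, norm_mul, norm_pow]
  simp

/-- For `n × n` Hermitian complex matrices `H, K` with `n ≥ 2` and `A = H + iK`,
if `H` is either positive definite or negative definite, then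
`0 < |det H| ≤ |det H| + |det K| ≤ |det A|`. -/
theorem ostrowski_taussky_definite {n : ℕ} (hn : 2 ≤ n)
    (H K : Matrix (Fin n) (Fin n) ℂ)
    (hH : H.IsHermitian) (hK : K.IsHermitian)
    (hHdef : H.PosDef ∨ (-H).PosDef)
    (A : Matrix (Fin n) (Fin n) ℂ) (hA : A = H + Complex.I • K) :
    0 < ‖H.det‖ ∧
      ‖H.det‖ ≤ ‖H.det‖ + ‖K.det‖ ∧
      ‖H.det‖ + ‖K.det‖ ≤ ‖A.det‖ := by
  have hdetH : H.det ≠ 0 := by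
    rcases hHdef with h | h
    · exact h.det_pos.ne'
    · intro h0
      have := h.det_pos.ne'
      rw [det_neg, h0, mul_zero] at this
      exact this rfl
  refine ⟨norm_pos_iff.mpr hdetH, le_add_of_nonneg_right (norm_nonneg _), ?_⟩
  rcases hHdef with h | h
  · rw [hA]; exact myMain hn H K h hK
  · have hmain := myMain hn (-H) (-K) h hK.neg
    have hAneg : (-H) + Complex.I • (-K) = -A := by rw [hA]; rw [smul_neg]; abel
    rw [hAneg, myAbsDetNeg, myAbsDetNeg, myAbsDetNeg] at hmain
    exact hmain
end
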